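/- Let θ > 0 satisfy fθ < −Re λ for every nonzero complex eigenvalue λ of D+B, and suppose that ζ_θ, a nonzero vector in the kernel of M := D+Bᵀ − θE + fθI, has all coordinates strictly positive. Then for every x ∈ ℝⁿ₊ with ⟨e,x⟩ > 0: (i) Y(t) := exp(tM)(x/⟨e,x⟩) converges, as t → ∞, to ζ_θ/⟨e,ζ_θ⟩; (ii) if moreover m : [0,∞) → (0,∞) is differentiable, satisfies m′(t) = (φ(m(t)) − fθ) m(t) with m(0) = ⟨e,x⟩ for some continuous φ : (0,∞) → ℝ, and m(t) → m̂ ∈ (0,∞) as t → ∞, then X := mY converges to m̂ · ζ_θ/⟨e,ζ_θ⟩. -/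

import Mathlib

open Matrix Finset Filter

/-- The diagonal matrix of outflows: `D i i = -∑_{j ≠ i} B i j`. -/
noncomputable def Dmat {n : ℕ} (B : Matrix (Fin n) (Fin n) ℝ) : Matrix (Fin n) (Fin n) ℝ :=
  Matrix.diagonal fun i => -∑ j ∈ Finset.univ.erase i, B i j

/-- Strong connectivity of the directed graph with an edge `i → j` whenever `B i j > 0`. -/
def StronglyConnected {n : ℕ} (B : Matrix (Fin n) (Fin n) ℝ) : Prop :=
  ∀ i j : Fin n, Relation.ReflTransGen (fun a b => 0 < B a b) i j

/-- The matrix `E = ξ eᵀ`, whose `i`-th row is the all-ones row for `i ∈ F` and zero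
otherwise. -/
def Emat {n : ℕ} (F : Finset (Fin n)) : Matrix (Fin n) (Fin n) ℝ :=
  fun i _ => if i ∈ F then 1 else 0

set_option maxHeartbeats 1000000

namespace Stmt13Aux

open NormedSpace

variable {n : ℕ}

section ExpBasic
variable {𝕜 : Type} [RCLike 𝕜]

noncomputable def mulVecCLM (v : Fin n → 𝕜) :
    Matrix (Fin n) (Fin n) 𝕜 →L[ℝ] (Fin n → 𝕜) :=
  LinearMap.toContinuousLinearMap
    { toFun := fun N => N *ᵥ v
      map_add' := fun N₁ N₂ => Matrix.add_mulVec N₁ N₂ v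
      map_smul' := fun r N => Matrix.smul_mulVec r N v }

lemma exp_mulVec_tsum (X : Matrix (Fin n) (Fin n) 𝕜) (v : Fin n → 𝕜) :
    exp X *ᵥ v = ∑' m : ℕ, ((m.factorial : ℝ)⁻¹) • (X ^ m *ᵥ v) := by
  letI : SeminormedRing (Matrix (Fin n) (Fin n) 𝕜) := Matrix.linftyOpSemiNormedRing
  letI : NormedRing (Matrix (Fin n) (Fin n) 𝕜) := Matrix.linftyOpNormedRing
  letI : NormedAlgebra ℝ (Matrix (Fin n) (Fin n) 𝕜) := Matrix.linftyOpNormedAlgebra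
  have hsumm := NormedSpace.expSeries_summable' (𝕂 := ℝ) X
  have := (mulVecCLM (n := n) v).map_tsum hsumm
  rw [NormedSpace.exp_eq_tsum ℝ]
  have h2 : mulVecCLM v (∑' m : ℕ, ((m.factorial : ℝ)⁻¹) • X ^ m)
      = ∑' m : ℕ, mulVecCLM v (((m.factorial : ℝ)⁻¹) • X ^ m) := this
  have h3 : ∀ m : ℕ, mulVecCLM v (((m.factorial : ℝ)⁻¹) • X ^ m)
      = ((m.factorial : ℝ)⁻¹) • (X ^ m *ᵥ v) := fun m => (mulVecCLM v).map_smul _ _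
  simp only [h3] at h2
  exact h2

lemma exp_mulVec_of_ker (X : Matrix (Fin n) (Fin n) 𝕜) (v : Fin n → 𝕜)
    (h : X *ᵥ v = 0) : exp X *ᵥ v = v := by
  rw [exp_mulVec_tsum]
  have hz : ∀ m : ℕ, m ≠ 0 → ((m.factorial : ℝ)⁻¹) • (X ^ m *ᵥ v) = 0 := by
    intro m hm
    obtain ⟨k, rfl⟩ := Nat.exists_eq_succ_of_ne_zero hm
    have : X ^ (k + 1) *ᵥ v = 0 := by
      rw [pow_succ, ← Matrix.mulVec_mulVec, h, Matrix.mulVec_zero]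
    rw [this, smul_zero]
  rw [tsum_eq_single 0 hz]
  simp

end ExpBasic

noncomputable def entryCLM (i j : Fin n) : Matrix (Fin n) (Fin n) ℝ →L[ℝ] ℝ :=
  LinearMap.toContinuousLinearMap
    { toFun := fun N => N i j
      map_add' := fun _ _ => rfl
      map_smul' := fun _ _ => rfl }

lemma pow_entry_nonneg {P : Matrix (Fin n) (Fin n) ℝ} (hP : ∀ i j, 0 ≤ P i j) :
    ∀ (m : ℕ) (i j : Fin n), 0 ≤ (P ^ m) i j := by
  intro m
  induction m with
  | zero => intro i j; simp [Matrix.one_apply]; positivity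
  | succ k ih =>
    intro i j
    rw [pow_succ, Matrix.mul_apply]
    exact Finset.sum_nonneg fun l _ => mul_nonneg (ih i l) (hP l j)

lemma exp_entry_pos {P : Matrix (Fin n) (Fin n) ℝ} (hP : ∀ i j, 0 ≤ P i j)
    {i j : Fin n} {k : ℕ} (hk : 0 < (P ^ k) i j) : 0 < (exp P) i j := by
  letI : SeminormedRing (Matrix (Fin n) (Fin n) ℝ) := Matrix.linftyOpSemiNormedRing
  letI : NormedRing (Matrix (Fin n) (Fin n) ℝ) := Matrix.linftyOpNormedRing
  letI : NormedAlgebra ℝ (Matrix (Fin n) (Fin n) ℝ) := Matrix.linftyOpNormedAlgebra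
  have hsumm := NormedSpace.expSeries_summable' (𝕂 := ℝ) P
  have hmap := (entryCLM i j).map_tsum hsumm
  have hrw : (exp P) i j = ∑' m : ℕ, ((m.factorial : ℝ)⁻¹) * ((P ^ m) i j) := by
    have h3 : ∀ m : ℕ, entryCLM i j (((m.factorial : ℝ)⁻¹) • P ^ m)
        = ((m.factorial : ℝ)⁻¹) * ((P ^ m) i j) := fun m => by
      simp [entryCLM, LinearMap.toContinuousLinearMap]
      exact Or.inl rfl
    have : entryCLM i j (∑' m : ℕ, ((m.factorial : ℝ)⁻¹) • P ^ m)
        = ∑' m : ℕ, entryCLM i j (((m.factorial : ℝ)⁻¹) • P ^ m) := hmap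
    simp only [h3] at this
    rw [show (exp P) i j = (entryCLM i j) (∑' m : ℕ, ((m.factorial : ℝ)⁻¹) • P ^ m) from by
      rw [NormedSpace.exp_eq_tsum ℝ]; rfl] at *
    rw [this]
  rw [hrw]
  have hterm : ∀ m : ℕ, 0 ≤ ((m.factorial : ℝ)⁻¹) * ((P ^ m) i j) := fun m =>
    mul_nonneg (by positivity) (pow_entry_nonneg hP m i j)
  have hsum2 : Summable (fun m : ℕ => ((m.factorial : ℝ)⁻¹) * ((P ^ m) i j)) := by
    have := (entryCLM i j).summable hsumm
    simp [entryCLM, LinearMap.toContinuousLinearMap] at this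
    exact this
  have hle := Summable.le_tsum hsum2 k (fun m _ => hterm m)
  have : 0 < ((k.factorial : ℝ)⁻¹) * ((P ^ k) i j) :=
    mul_pos (by positivity) hk
  linarith

lemma pow_entry_pos_of_path {B P : Matrix (Fin n) (Fin n) ℝ}
    (hP : ∀ i j, 0 ≤ P i j)
    (hPB : ∀ i j, 0 < B i j → 0 < P i j) {i j : Fin n}
    (h : Relation.ReflTransGen (fun a b => 0 < B a b) i j) :
    ∃ k : ℕ, 0 < (P ^ k) i j := by
  induction h with
  | refl => exact ⟨0, by simp [Matrix.one_apply]⟩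
  | @tail b c hib hbc ih =>
    obtain ⟨k, hk⟩ := ih
    refine ⟨k + 1, ?_⟩
    rw [pow_succ, Matrix.mul_apply]
    have hnn : ∀ i j, 0 ≤ (P ^ k) i j := pow_entry_nonneg hP k
    refine Finset.sum_pos' (fun l _ => mul_nonneg (hnn i l) (hP l c)) ⟨b, Finset.mem_univ b, ?_⟩
    exact mul_pos hk (hPB b c hbc)

lemma exp_smul_one_mat (c : ℝ) :
    exp (c • (1 : Matrix (Fin n) (Fin n) ℝ)) = Real.exp c • (1 : Matrix (Fin n) (Fin n) ℝ) := by
  rw [Matrix.smul_one_eq_diagonal, Matrix.exp_diagonal, Pi.exp_def,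
    Matrix.smul_one_eq_diagonal]
  simp [← Real.exp_eq_exp_ℝ]

variable {B : Matrix (Fin n) (Fin n) ℝ}

lemma rowsum_A (hdiag : ∀ i, B i i = 0) (i : Fin n) :
    ∑ j, (Dmat B + B) i j = 0 := by
  have h1 : ∑ j, (Dmat B) i j = -∑ j ∈ Finset.univ.erase i, B i j := by
    simp [Dmat, Matrix.diagonal_apply, Finset.sum_ite_eq]
  have h2 : ∑ j, B i j = ∑ j ∈ Finset.univ.erase i, B i j := by
    rw [← Finset.add_sum_erase _ _ (Finset.mem_univ i), hdiag, zero_add]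
  simp only [Matrix.add_apply, Finset.sum_add_distrib, h1, h2]
  ring

lemma A_mulVec_one (hdiag : ∀ i, B i i = 0) :
    (Dmat B + B) *ᵥ (fun _ => (1 : ℝ)) = 0 := by
  funext i
  simp only [Matrix.mulVec, dotProduct, mul_one, Pi.zero_apply]
  simpa [Matrix.add_apply] using rowsum_A hdiag i

lemma exp_A_pos (hB : ∀ i j, 0 ≤ B i j) (hdiag : ∀ i, B i i = 0)
    (hconn : StronglyConnected B) (i j : Fin n) :
    0 < (exp (Dmat B + B)) i j := by
  classical
  set c : ℝ := 1 + ∑ i, ∑ j ∈ Finset.univ.erase i, B i j with hc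
  have hcpos : ∀ i, ∑ j ∈ Finset.univ.erase i, B i j ≤ c - 1 := by
    intro i
    have : ∑ j ∈ Finset.univ.erase i, B i j ≤ ∑ i, ∑ j ∈ Finset.univ.erase i, B i j :=
      Finset.single_le_sum (f := fun i => ∑ j ∈ Finset.univ.erase i, B i j)
        (fun i _ => Finset.sum_nonneg fun j _ => hB i j) (Finset.mem_univ i)
    rw [hc]; linarith
  set P : Matrix (Fin n) (Fin n) ℝ := (Dmat B + B) + c • 1 with hPdef
  have hPentry : ∀ a b, P a b
      = (if a = b then -∑ j ∈ Finset.univ.erase a, B a j + c else 0) + B a b := by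
    intro a b
    simp [hPdef, Dmat, Matrix.add_apply, Matrix.diagonal_apply, Matrix.smul_apply,
      Matrix.one_apply]
    split <;> ring
  have hP : ∀ a b, 0 ≤ P a b := by
    intro a b
    rw [hPentry]
    split
    · have := hcpos a; have := hB a b; linarith
    · simpa using hB a b
  have hPB : ∀ a b, 0 < B a b → 0 < P a b := by
    intro a b hab
    have hne : a ≠ b := fun h => by rw [h, hdiag] at hab; exact lt_irrefl 0 hab
    rw [hPentry]
    simpa [hne] using hab
  obtain ⟨k, hk⟩ := pow_entry_pos_of_path hP hPB (hconn i j)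
  have hA : (Dmat B + B) = P + (-c) • 1 := by
    simp [hPdef]
  have hcomm : Commute P ((-c) • (1 : Matrix (Fin n) (Fin n) ℝ)) :=
    (Commute.one_right P).smul_right _
  have hexp : exp (Dmat B + B) = Real.exp (-c) • exp P := by
    rw [hA, Matrix.exp_add_of_commute P _ hcomm, exp_smul_one_mat, mul_smul_one]
  rw [hexp, Matrix.smul_apply]
  have := exp_entry_pos hP hk (i := i) (j := j)
  have hre : (0:ℝ) < Real.exp (-c) := Real.exp_pos _
  positivity


lemma abs_sum_lt_sum_abs {f : Fin n → ℝ} {a b : Fin n} (hfa : 0 < f a) (hfb : f b < 0) :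
    |∑ i, f i| < ∑ i, |f i| := by
  have h1 : ∑ i, f i < ∑ i, |f i| :=
    Finset.sum_lt_sum (fun i _ => le_abs_self _)
      ⟨b, Finset.mem_univ b, lt_of_lt_of_le hfb (abs_nonneg _)⟩
  have h2 : ∑ i, -f i < ∑ i, |f i| :=
    Finset.sum_lt_sum (fun i _ => neg_le_abs _)
      ⟨a, Finset.mem_univ a, by have := abs_nonneg (f a); linarith⟩
  rw [Finset.sum_neg_distrib] at h2
  rw [abs_lt]
  constructor <;> linarith

lemma perron_real (hB : ∀ i j, 0 ≤ B i j) (hdiag : ∀ i, B i i = 0)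
    (hconn : StronglyConnected B) (v : Fin n → ℝ)
    (hv : (Dmat B + B)ᵀ *ᵥ v = 0) (hs : ∑ i, v i = 0) : v = 0 := by
  classical
  set Q : Matrix (Fin n) (Fin n) ℝ := exp (Dmat B + B) with hQ
  have hQpos : ∀ i j, 0 < Q i j := exp_A_pos hB hdiag hconn
  have hQrow : ∀ i, ∑ j, Q i j = 1 := by
    intro i
    have := exp_mulVec_of_ker (Dmat B + B) (fun _ => (1:ℝ)) (A_mulVec_one hdiag)
    have h := congrFun this i
    simpa [Matrix.mulVec, dotProduct] using h
  have hfix : ∀ j, ∑ i, Q i j * v i = v j := by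
    intro j
    have hexpT : exp ((Dmat B + B)ᵀ) = Qᵀ := Matrix.exp_transpose _
    have := exp_mulVec_of_ker ((Dmat B + B)ᵀ) v hv
    rw [hexpT] at this
    have h := congrFun this j
    simpa [Matrix.mulVec, dotProduct, Matrix.transpose_apply] using h
  by_cases h1 : ∀ i, 0 ≤ v i
  · funext i
    exact (Finset.sum_eq_zero_iff_of_nonneg (fun i _ => h1 i)).mp hs i (Finset.mem_univ i)
  · by_cases h2 : ∀ i, v i ≤ 0
    · funext i
      have hs' : ∑ i, -v i = 0 := by rw [Finset.sum_neg_distrib, hs, neg_zero]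
      have hz := (Finset.sum_eq_zero_iff_of_nonneg
        (fun i _ => neg_nonneg.mpr (h2 i))).mp hs' i (Finset.mem_univ i)
      show v i = (0 : Fin n → ℝ) i
      rw [Pi.zero_apply]
      linarith
    · push_neg at h1 h2
      obtain ⟨a, ha⟩ := h1
      obtain ⟨b, hb⟩ := h2
      exfalso
      have hLT : ∑ j, |v j| < ∑ j, ∑ i, Q i j * |v i| := by
        apply Finset.sum_lt_sum
        · intro j _
          rw [← hfix j]
          calc |∑ i, Q i j * v i| ≤ ∑ i, |Q i j * v i| := Finset.abs_sum_le_sum_abs _ _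
            _ = ∑ i, Q i j * |v i| := by
              refine Finset.sum_congr rfl fun i _ => ?_
              rw [abs_mul, abs_of_pos (hQpos i j)]
        · refine ⟨a, Finset.mem_univ a, ?_⟩
          rw [← hfix a]
          have hlt : |∑ i, Q i a * v i| < ∑ i, |Q i a * v i| :=
            abs_sum_lt_sum_abs (a := b) (b := a)
              (mul_pos (hQpos b a) hb) (by nlinarith [hQpos a a])
          calc |∑ i, Q i a * v i| < ∑ i, |Q i a * v i| := hlt
            _ = ∑ i, Q i a * |v i| := by
              refine Finset.sum_congr rfl fun i _ => ?_
              rw [abs_mul, abs_of_pos (hQpos i a)]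
      have hEQ : ∑ j, ∑ i, Q i j * |v i| = ∑ i, |v i| := by
        rw [Finset.sum_comm]
        calc ∑ i, ∑ j, Q i j * |v i| = ∑ i, (∑ j, Q i j) * |v i| := by
              refine Finset.sum_congr rfl fun i _ => ?_
              rw [Finset.sum_mul]
          _ = ∑ i, |v i| := by
              refine Finset.sum_congr rfl fun i _ => ?_
              rw [hQrow i, one_mul]
      linarith


lemma perron_complex (hB : ∀ i j, 0 ≤ B i j) (hdiag : ∀ i, B i i = 0)
    (hconn : StronglyConnected B) (u : Fin n → ℂ)
    (hu : ((Dmat B + B)ᵀ.map Complex.ofReal) *ᵥ u = 0) (hs : ∑ i, u i = 0) : u = 0 := by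
  set vr : Fin n → ℝ := fun i => (u i).re with hvr
  set vi : Fin n → ℝ := fun i => (u i).im with hvi
  have hre : (Dmat B + B)ᵀ *ᵥ vr = 0 := by
    funext j
    have h := congrFun hu j
    simp only [Matrix.mulVec, dotProduct, Matrix.map_apply, Pi.zero_apply] at h
    have h2 := congrArg Complex.re h
    simpa [Complex.re_sum, vr, Matrix.mulVec, dotProduct] using h2
  have him : (Dmat B + B)ᵀ *ᵥ vi = 0 := by
    funext j
    have h := congrFun hu j
    simp only [Matrix.mulVec, dotProduct, Matrix.map_apply, Pi.zero_apply] at h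
    have h2 := congrArg Complex.im h
    simpa [Complex.im_sum, vi, Matrix.mulVec, dotProduct] using h2
  have hsr : ∑ i, vr i = 0 := by
    have := congrArg Complex.re hs
    simpa [Complex.re_sum, vr] using this
  have hsi : ∑ i, vi i = 0 := by
    have := congrArg Complex.im hs
    simpa [Complex.im_sum, vi] using this
  have h1 := perron_real hB hdiag hconn vr hre hsr
  have h2 := perron_real hB hdiag hconn vi him hsi
  funext i
  have e1 : (u i).re = 0 := congrFun h1 i
  have e2 : (u i).im = 0 := congrFun h2 i
  exact Complex.ext e1 e2

lemma colsum_M (hdiag : ∀ i, B i i = 0) (F : Finset (Fin n)) (θ : ℝ) (i : Fin n) :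
    ∑ j, ((Dmat B + B)ᵀ - θ • Emat F + ((F.card : ℝ) * θ) • 1) j i = 0 := by
  classical
  have h1 : ∑ j, ((Dmat B + B)ᵀ) j i = 0 := by
    simpa [Matrix.transpose_apply] using rowsum_A hdiag i
  have h2 : ∑ j, (Emat F) j i = (F.card : ℝ) := by
    simp [Emat, Finset.sum_boole]
  have h3 : ∑ j, (((F.card : ℝ) * θ) • (1 : Matrix (Fin n) (Fin n) ℝ)) j i
      = (F.card : ℝ) * θ := by
    simp [Matrix.smul_apply, Matrix.one_apply]
  simp only [Matrix.add_apply, Matrix.sub_apply, Matrix.smul_apply, Finset.sum_add_distrib,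
    Finset.sum_sub_distrib, h1]
  simp only [smul_eq_mul, ← Finset.mul_sum, h2]
  have h4 : ∑ x : Fin n, (1 : Matrix (Fin n) (Fin n) ℝ) x i = 1 := by
    simp [Matrix.one_apply]
  rw [h4]
  ring

lemma eig_re_neg (hB : ∀ i j, 0 ≤ B i j) (hdiag : ∀ i, B i i = 0)
    (hconn : StronglyConnected B) (F : Finset (Fin n)) (θ : ℝ)
    (hspec : ∀ (μ : ℂ) (v : Fin n → ℂ), v ≠ 0 →
      ((Dmat B + B).map Complex.ofReal) *ᵥ v = μ • v → μ ≠ 0 →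
      (F.card : ℝ) * θ < -μ.re)
    (μ : ℂ) (u : Fin n → ℂ) (hu0 : u ≠ 0) (hsum : ∑ i, u i = 0)
    (heq : (((Dmat B + B)ᵀ - θ • Emat F + ((F.card : ℝ) * θ) • 1).map Complex.ofReal) *ᵥ u
      = μ • u) :
    μ.re < 0 := by
  classical
  set fθ : ℝ := (F.card : ℝ) * θ with hfθ
  have hE : ((Emat F).map Complex.ofReal) *ᵥ u = 0 := by
    funext i
    simp only [Matrix.mulVec, dotProduct, Matrix.map_apply, Emat, Pi.zero_apply]
    by_cases hi : i ∈ F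
    · simp [hi, hsum]
    · simp [hi]
  have hmap : (((Dmat B + B)ᵀ - θ • Emat F + (fθ : ℝ) • 1).map Complex.ofReal)
      = ((Dmat B + B)ᵀ.map Complex.ofReal) - (θ : ℂ) • ((Emat F).map Complex.ofReal)
        + ((fθ : ℝ) : ℂ) • 1 := by
    funext a b
    simp [Matrix.map_apply, Matrix.add_apply, Matrix.sub_apply, Matrix.smul_apply,
      Matrix.one_apply]
    split <;> simp
  rw [hmap] at heq
  have hAu : ((Dmat B + B)ᵀ.map Complex.ofReal) *ᵥ u = (μ - (fθ : ℂ)) • u := by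
    have h1 : ((Dmat B + B)ᵀ.map Complex.ofReal) *ᵥ u - (θ:ℂ) • (((Emat F).map Complex.ofReal) *ᵥ u)
        + ((fθ:ℝ):ℂ) • u = μ • u := by
      rw [← heq]
      rw [Matrix.add_mulVec, Matrix.sub_mulVec]
      congr 1
      · congr 1
        rw [← Matrix.smul_mulVec]
      · rw [Matrix.smul_mulVec, Matrix.one_mulVec]
    rw [hE, smul_zero, sub_zero] at h1
    have : ((Dmat B + B)ᵀ.map Complex.ofReal) *ᵥ u = μ • u - ((fθ:ℝ):ℂ) • u := by
      rw [← h1]; abel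
    rw [this, sub_smul]
  by_cases hμ : μ = ((fθ : ℝ) : ℂ)
  · exfalso
    rw [hμ, sub_self, zero_smul] at hAu
    exact hu0 (perron_complex hB hdiag hconn u hAu hsum)
  · set ν : ℂ := μ - (fθ : ℂ) with hν
    have hν0 : ν ≠ 0 := sub_ne_zero.mpr hμ
    have hker : (((Dmat B + B)ᵀ.map Complex.ofReal) - ν • 1) *ᵥ u = 0 := by
      rw [Matrix.sub_mulVec, hAu, Matrix.smul_mulVec, Matrix.one_mulVec, sub_self]
    have hdet : (((Dmat B + B)ᵀ.map Complex.ofReal) - ν • 1).det = 0 :=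
      (Matrix.exists_mulVec_eq_zero_iff).mp ⟨u, hu0, hker⟩
    have hdet' : (((Dmat B + B).map Complex.ofReal) - ν • 1).det = 0 := by
      rw [← Matrix.det_transpose]
      rw [Matrix.transpose_sub, Matrix.transpose_smul, Matrix.transpose_one,
        ← Matrix.transpose_map]
      exact hdet
    obtain ⟨v, hv0, hv⟩ := (Matrix.exists_mulVec_eq_zero_iff).mpr hdet'
    have hvA : ((Dmat B + B).map Complex.ofReal) *ᵥ v = ν • v := by
      rw [Matrix.sub_mulVec, Matrix.smul_mulVec, Matrix.one_mulVec, sub_eq_zero] at hv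
      exact hv
    have := hspec ν v hv0 hvA hν0
    have hre : ν.re = μ.re - fθ := by simp [hν]
    rw [hre] at this
    linarith


lemma exp_smul_one_mat_c (c : ℂ) :
    exp (c • (1 : Matrix (Fin n) (Fin n) ℂ)) = Complex.exp c • (1 : Matrix (Fin n) (Fin n) ℂ) := by
  rw [Matrix.smul_one_eq_diagonal, Matrix.exp_diagonal, Pi.exp_def,
    Matrix.smul_one_eq_diagonal]
  congr 1
  funext _
  rw [← Complex.exp_eq_exp_ℂ]

lemma pow_mulVec {𝕜 : Type} [RCLike 𝕜] (X : Matrix (Fin n) (Fin n) 𝕜) (k : ℕ)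
    (v : Fin n → 𝕜) : (X ^ k) *ᵥ v = (Matrix.mulVecLin X ^ k) v := by
  induction k generalizing v with
  | zero => simp
  | succ m ih =>
    rw [pow_succ, pow_succ, ← Matrix.mulVec_mulVec, Module.End.mul_apply, ← ih]
    simp [Matrix.mulVecLin_apply]

lemma real_smul_vec (r : ℝ) (x : Fin n → ℂ) : r • x = ((r : ℂ)) • x :=
  funext fun i => by simp [Pi.smul_apply, Complex.real_smul, smul_eq_mul]

lemma decay_component (Mc : Matrix (Fin n) (Fin n) ℂ) (μ : ℂ) (hμ : μ.re < 0)
    (u : Fin n → ℂ) (k : ℕ) (hk : ((Mc - μ • 1) ^ k) *ᵥ u = 0) :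
    Filter.Tendsto (fun t : ℝ => exp (t • Mc) *ᵥ u) Filter.atTop (nhds 0) := by
  classical
  set N : Matrix (Fin n) (Fin n) ℂ := Mc - μ • 1 with hN
  have hsplit : ∀ t : ℝ, exp (t • Mc) *ᵥ u
      = Complex.exp (t • μ) • (exp (t • N) *ᵥ u) := by
    intro t
    have hdecomp : t • Mc = (t • μ) • (1 : Matrix (Fin n) (Fin n) ℂ) + t • N := by
      have h1 : (t • μ) • (1 : Matrix (Fin n) (Fin n) ℂ) = t • (μ • 1) := smul_assoc t μ 1
      rw [hN, smul_sub, h1]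
      abel
    have hcomm : Commute ((t • μ) • (1 : Matrix (Fin n) (Fin n) ℂ)) (t • N) :=
      ((Commute.one_left (t • N)).smul_left _)
    rw [hdecomp, Matrix.exp_add_of_commute _ _ hcomm, exp_smul_one_mat_c,
      smul_mul_assoc, one_mul, Matrix.smul_mulVec]
  have hser : ∀ t : ℝ, exp (t • N) *ᵥ u
      = ∑ j ∈ Finset.range k, ((j.factorial : ℝ)⁻¹) • (t ^ j • (N ^ j *ᵥ u)) := by
    intro t
    rw [exp_mulVec_tsum]
    rw [tsum_eq_sum (s := Finset.range k)]
    · refine Finset.sum_congr rfl fun j _ => ?_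
      rw [smul_pow, Matrix.smul_mulVec]
    · intro m hm
      rw [Finset.mem_range, not_lt] at hm
      have : N ^ m *ᵥ u = 0 := by
        obtain ⟨d, rfl⟩ := Nat.exists_eq_add_of_le hm
        rw [add_comm, pow_add, ← Matrix.mulVec_mulVec, hk, Matrix.mulVec_zero]
      rw [smul_pow, Matrix.smul_mulVec, this, smul_zero, smul_zero]
  have heq : ∀ t : ℝ, exp (t • Mc) *ᵥ u
      = ∑ j ∈ Finset.range k,
          (Complex.exp (t • μ) * (t : ℂ) ^ j * ((j.factorial : ℝ)⁻¹ : ℂ)) • (N ^ j *ᵥ u) := by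
    intro t
    rw [hsplit, hser, Finset.smul_sum]
    refine Finset.sum_congr rfl fun j _ => ?_
    have e1 : (t : ℝ) ^ j • (N ^ j *ᵥ u) = ((t : ℂ) ^ j) • (N ^ j *ᵥ u) := by
      rw [show ((t : ℂ) ^ j) = (((t ^ j : ℝ) : ℂ)) by push_cast; ring]
      exact real_smul_vec _ _
    have e2 := real_smul_vec ((j.factorial : ℝ)⁻¹) ((t:ℂ) ^ j • (N ^ j *ᵥ u))
    rw [e1, e2, smul_smul, smul_smul]
    norm_cast
    ring_nf
  rw [show (fun t : ℝ => exp (t • Mc) *ᵥ u)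
      = fun t : ℝ => ∑ j ∈ Finset.range k,
          (Complex.exp (t • μ) * (t : ℂ) ^ j * ((j.factorial : ℝ)⁻¹ : ℂ)) • (N ^ j *ᵥ u)
    from funext heq]
  have hlim : Filter.Tendsto (fun t : ℝ => ∑ j ∈ Finset.range k,
      (Complex.exp (t • μ) * (t : ℂ) ^ j * ((j.factorial : ℝ)⁻¹ : ℂ)) • (N ^ j *ᵥ u))
      Filter.atTop (nhds (∑ _j ∈ Finset.range k, (0 : Fin n → ℂ))) := by
    refine tendsto_finset_sum _ fun j _ => ?_
    have hzc : Filter.Tendsto (fun t : ℝ => Complex.exp (t • μ) * (t : ℂ) ^ j)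
        Filter.atTop (nhds 0) := by
      rw [tendsto_zero_iff_norm_tendsto_zero]
      set b : ℝ := -μ.re with hb
      have hbpos : 0 < b := by rw [hb]; linarith
      have hknown := tendsto_rpow_mul_exp_neg_mul_atTop_nhds_zero (j : ℝ) b hbpos
      have hcongr : ∀ᶠ t : ℝ in Filter.atTop,
          t ^ (j : ℝ) * Real.exp (-b * t) = ‖Complex.exp (t • μ) * (t : ℂ) ^ j‖ := by
        filter_upwards [Filter.eventually_ge_atTop (1 : ℝ)] with t ht
        have ht0 : (0 : ℝ) ≤ t := by linarith
        rw [norm_mul, Complex.norm_exp]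
        rw [show ((t : ℝ) • μ).re = t * μ.re by simp [Complex.smul_re]]
        rw [norm_pow, Complex.norm_real, Real.norm_eq_abs, abs_of_nonneg ht0,
          ← Real.rpow_natCast t j]
        rw [show -b * t = t * μ.re by rw [hb]; ring]
        ring
      exact hknown.congr' hcongr
    have := (hzc.mul_const (((j.factorial : ℝ)⁻¹ : ℂ))).smul_const (N ^ j *ᵥ u)
    simpa using this
  simpa using hlim


lemma exp_map_ofReal (X : Matrix (Fin n) (Fin n) ℝ) :
    (exp X).map Complex.ofReal = exp (X.map Complex.ofReal) := by
  letI : SeminormedRing (Matrix (Fin n) (Fin n) ℝ) := Matrix.linftyOpSemiNormedRing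
  letI : NormedRing (Matrix (Fin n) (Fin n) ℝ) := Matrix.linftyOpNormedRing
  letI : NormedAlgebra ℝ (Matrix (Fin n) (Fin n) ℝ) := Matrix.linftyOpNormedAlgebra
  letI : SeminormedRing (Matrix (Fin n) (Fin n) ℂ) := Matrix.linftyOpSemiNormedRing
  letI : NormedRing (Matrix (Fin n) (Fin n) ℂ) := Matrix.linftyOpNormedRing
  letI : NormedAlgebra ℝ (Matrix (Fin n) (Fin n) ℂ) := Matrix.linftyOpNormedAlgebra
  letI : NormedAlgebra ℚ (Matrix (Fin n) (Fin n) ℝ) := Matrix.linftyOpNormedAlgebra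
  letI : NormedAlgebra ℚ (Matrix (Fin n) (Fin n) ℂ) := Matrix.linftyOpNormedAlgebra
  have hcont : Continuous (Complex.ofRealHom.mapMatrix :
      Matrix (Fin n) (Fin n) ℝ →+* Matrix (Fin n) (Fin n) ℂ) := by
    have : (Complex.ofRealHom.mapMatrix :
        Matrix (Fin n) (Fin n) ℝ →+* Matrix (Fin n) (Fin n) ℂ)
        = fun X : Matrix (Fin n) (Fin n) ℝ => X.map Complex.ofReal := rfl
    rw [this]
    let lin : (Matrix (Fin n) (Fin n) ℝ) →ₗ[ℝ] (Matrix (Fin n) (Fin n) ℂ) :=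
      { toFun := fun X => X.map Complex.ofReal
        map_add' := fun X Y => by
          funext a b; simp [Matrix.map_apply, Matrix.add_apply]
        map_smul' := fun r X => by
          funext a b; simp [Matrix.map_apply, Matrix.smul_apply] }
    exact LinearMap.continuous_of_finiteDimensional lin
  exact map_exp Complex.ofRealHom.mapMatrix hcont X

lemma mulVec_map_ofReal (X : Matrix (Fin n) (Fin n) ℝ) (w : Fin n → ℝ) (i : Fin n) :
    ((X.map Complex.ofReal) *ᵥ (fun i => ((w i : ℝ) : ℂ))) i = (((X *ᵥ w) i : ℝ) : ℂ) := by
  simp only [Matrix.mulVec, dotProduct, Matrix.map_apply]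
  push_cast
  rfl


lemma decay (hB : ∀ i j, 0 ≤ B i j) (hdiag : ∀ i, B i i = 0)
    (hconn : StronglyConnected B) (F : Finset (Fin n)) (θ : ℝ)
    (hspec : ∀ (μ : ℂ) (v : Fin n → ℂ), v ≠ 0 →
      ((Dmat B + B).map Complex.ofReal) *ᵥ v = μ • v → μ ≠ 0 →
      (F.card : ℝ) * θ < -μ.re)
    (w : Fin n → ℝ) (hw : ∑ i, w i = 0) :
    Filter.Tendsto (fun t : ℝ =>
        exp (t • ((Dmat B + B)ᵀ - θ • Emat F + ((F.card : ℝ) * θ) • 1)) *ᵥ w)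
      Filter.atTop (nhds 0) := by
  classical
  set Mr : Matrix (Fin n) (Fin n) ℝ :=
    (Dmat B + B)ᵀ - θ • Emat F + ((F.card : ℝ) * θ) • 1 with hMr
  set Mc : Matrix (Fin n) (Fin n) ℂ := Mr.map Complex.ofReal with hMc
  set wc : Fin n → ℂ := fun i => ((w i : ℝ) : ℂ) with hwcdef
  have hcol : ∀ i, ∑ j, Mc j i = 0 := by
    intro i
    have hr := colsum_M (B := B) hdiag F θ i
    rw [hMc]
    simp only [Matrix.map_apply]
    rw [← Complex.ofReal_sum]
    rw [hMr] at *
    rw [hr, Complex.ofReal_zero]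
  let σ : (Fin n → ℂ) →ₗ[ℂ] ℂ :=
    { toFun := fun v => ∑ i, v i
      map_add' := fun a b => by simp [Finset.sum_add_distrib]
      map_smul' := fun c a => by simp [Finset.mul_sum] }
  have hσf : ∀ v : Fin n → ℂ, σ (Mc *ᵥ v) = 0 := by
    intro v
    show ∑ j, (Mc *ᵥ v) j = 0
    simp only [Matrix.mulVec, dotProduct]
    rw [Finset.sum_comm]
    refine Finset.sum_eq_zero fun x _ => ?_
    rw [← Finset.sum_mul, hcol x, zero_mul]
  set f : Module.End ℂ (Fin n → ℂ) := Matrix.mulVecLin Mc with hf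
  set W : Submodule ℂ (Fin n → ℂ) := LinearMap.ker σ with hW
  have hWinv : ∀ x ∈ W, f x ∈ W := fun x _ => LinearMap.mem_ker.mpr (hσf x)
  set g : Module.End ℂ W := f.restrict hWinv with hg
  have hwcW : wc ∈ W := by
    rw [hW, LinearMap.mem_ker]
    show ∑ i, wc i = 0
    rw [hwcdef]
    rw [← Complex.ofReal_sum, hw, Complex.ofReal_zero]
  have hmem : (⟨wc, hwcW⟩ : W) ∈ ⨆ μ, g.maxGenEigenspace μ := by
    rw [Module.End.iSup_maxGenEigenspace_eq_top g]; trivial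
  obtain ⟨c, hc, hcsum⟩ := (Submodule.mem_iSup_iff_exists_finsupp _ _).mp hmem
  have hwc_eq : wc = ∑ μ ∈ c.support, ((c μ : W) : Fin n → ℂ) := by
    have h1 := congrArg (Subtype.val) hcsum
    rw [Finsupp.sum] at h1
    have h2 : wc = ((∑ a ∈ c.support, c a : W) : Fin n → ℂ) := h1.symm
    rw [h2]
    simp
  have hC : Filter.Tendsto (fun t : ℝ => exp (t • Mc) *ᵥ wc) Filter.atTop (nhds 0) := by
    have hre : ∀ t : ℝ, exp (t • Mc) *ᵥ wc
        = ∑ μ ∈ c.support, exp (t • Mc) *ᵥ ((c μ : W) : Fin n → ℂ) := by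
      intro t
      rw [hwc_eq]
      have h5 := map_sum (Matrix.mulVecLin (exp (t • Mc)))
        (fun μ => ((c μ : W) : Fin n → ℂ)) c.support
      simp only [Matrix.mulVecLin_apply] at h5
      exact h5
    have hlim : Filter.Tendsto (fun t : ℝ =>
        ∑ μ ∈ c.support, exp (t • Mc) *ᵥ ((c μ : W) : Fin n → ℂ))
        Filter.atTop (nhds (∑ _μ ∈ c.support, (0 : Fin n → ℂ))) := by
      refine tendsto_finset_sum _ fun μ hμs => ?_
      by_cases hu0 : c μ = 0
      · simp only [hu0, ZeroMemClass.coe_zero, Matrix.mulVec_zero]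
        exact tendsto_const_nhds
      · set u : Fin n → ℂ := ((c μ : W) : Fin n → ℂ) with hu
        have hune : u ≠ 0 := by
          intro h
          exact hu0 (Subtype.ext h)
        obtain ⟨k, hk⟩ := (Module.End.mem_maxGenEigenspace g μ (c μ)).mp (hc μ)
        have hsub : ∀ x ∈ W, (f - μ • (1 : Module.End ℂ (Fin n → ℂ))) x ∈ W := by
          intro x hx
          simp only [LinearMap.sub_apply, LinearMap.smul_apply, Module.End.one_apply]
          exact W.sub_mem (hWinv x hx) (W.smul_mem μ hx)
        have hcoe : ∀ (m : ℕ) (x : W),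
            ((((g - μ • (1 : Module.End ℂ W)) ^ m) x : W) : Fin n → ℂ)
              = ((f - μ • (1 : Module.End ℂ (Fin n → ℂ))) ^ m) (x : Fin n → ℂ) := by
          intro m
          induction m with
          | zero => intro x; simp
          | succ p ih =>
            intro x
            rw [pow_succ', pow_succ', Module.End.mul_apply, Module.End.mul_apply]
            have hstep : ∀ y : W, (((g - μ • (1 : Module.End ℂ W)) y : W) : Fin n → ℂ)
                = (f - μ • (1 : Module.End ℂ (Fin n → ℂ))) (y : Fin n → ℂ) := by
              intro y
              simp [hg, LinearMap.restrict_coe_apply]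
            rw [hstep, ih x]
        have hk3 : ((f - μ • (1 : Module.End ℂ (Fin n → ℂ))) ^ k) u = 0 := by
          rw [hu, ← hcoe k (c μ), hk]
          simp
        have hlinM : (Mc - μ • 1).mulVecLin = f - μ • (1 : Module.End ℂ (Fin n → ℂ)) := by
          apply LinearMap.ext
          intro v
          rw [Matrix.mulVecLin_apply, Matrix.sub_mulVec, Matrix.smul_mulVec,
            Matrix.one_mulVec]
          simp [hf, Matrix.mulVecLin_apply]
        have hmat : ((Mc - μ • 1) ^ k) *ᵥ u = 0 := by
          rw [pow_mulVec, hlinM, hk3]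
        -- eigenvector with Re μ < 0
        have hμre : μ.re < 0 := by
          have hP : ∃ j, ((f - μ • (1 : Module.End ℂ (Fin n → ℂ))) ^ j) u = 0 := ⟨k, hk3⟩
          set j0 := Nat.find hP with hj0
          have hj0pos : j0 ≠ 0 := by
            intro h
            have := Nat.find_spec hP
            rw [← hj0, h, pow_zero, Module.End.one_apply] at this
            exact hune this
          obtain ⟨j1, hj1⟩ := Nat.exists_eq_succ_of_ne_zero hj0pos
          set u' : Fin n → ℂ := ((f - μ • (1 : Module.End ℂ (Fin n → ℂ))) ^ j1) u with hu'
          have hu'ne : u' ≠ 0 := by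
            have := Nat.find_min hP (m := j1) (by omega)
            exact this
          have hu'ker : (f - μ • (1 : Module.End ℂ (Fin n → ℂ))) u' = 0 := by
            have := Nat.find_spec hP
            rw [← hj0, hj1, pow_succ', Module.End.mul_apply] at this
            exact this
          have heig : f u' = μ • u' := by
            have := hu'ker
            simp only [LinearMap.sub_apply, LinearMap.smul_apply, Module.End.one_apply,
              sub_eq_zero] at this
            exact this
          have hu'W : u' ∈ W :=
            Module.End.pow_apply_mem_of_forall_mem j1 hsub u (c μ).2
          have hu'sum : ∑ i, u' i = 0 := hu'W
          exact eig_re_neg hB hdiag hconn F θ hspec μ u' hu'ne hu'sum (by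
            rw [← hMc]
            show Mc *ᵥ u' = μ • u'
            rw [show Mc *ᵥ u' = f u' from rfl, heig])
        exact decay_component Mc μ hμre u k hmat
    rw [show (fun t : ℝ => exp (t • Mc) *ᵥ wc) = fun t : ℝ =>
        ∑ μ ∈ c.support, exp (t • Mc) *ᵥ ((c μ : W) : Fin n → ℂ) from funext hre]
    simpa using hlim
  rw [tendsto_pi_nhds]
  intro i
  have hci := (tendsto_pi_nhds.mp hC) i
  have hcomp : (fun t : ℝ => (exp (t • Mr) *ᵥ w) i)
      = fun t : ℝ => ((exp (t • Mc) *ᵥ wc) i).re := by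
    funext t
    have hsmulmap : (t • Mr).map Complex.ofReal = t • Mc := by
      rw [hMc]
      funext a b
      simp [Matrix.map_apply, Matrix.smul_apply]
    have hmapexp : (exp (t • Mr)).map Complex.ofReal = exp (t • Mc) := by
      rw [exp_map_ofReal, hsmulmap]
    rw [← hmapexp, hwcdef, mulVec_map_ofReal]
    simp
  rw [show (fun t : ℝ => (exp (t • ((Dmat B + B)ᵀ - θ • Emat F + ((F.card : ℝ) * θ) • 1)) *ᵥ w) i)
      = (fun t : ℝ => (exp (t • Mr) *ᵥ w) i) from rfl, hcomp]
  have := (Complex.continuous_re.tendsto _).comp hci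
  exact this

end Stmt13Aux

open Stmt13Aux in
/-- If `fθ < −Re λ` for every nonzero eigenvalue `λ` of `D+B` and `ζ_θ`, a nonzero kernel
vector of `M = D+Bᵀ − θE + fθI`, is strictly positive, then: (i) `Y(t) = exp(tM)(x/⟨e,x⟩)`
converges to `ζ_θ/⟨e,ζ_θ⟩`; (ii) if, moreover, the total mass `m` solves
`m′ = (φ(m) − fθ)m`, `m(0) = ⟨e,x⟩`, and `m(t) → m̂ ∈ (0,∞)`, then `X = mY` converges to
`m̂ · ζ_θ/⟨e,ζ_θ⟩`. -/
theorem stmt13 {n : ℕ} (hn : 1 ≤ n) (B : Matrix (Fin n) (Fin n) ℝ)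
    (hB : ∀ i j, 0 ≤ B i j) (hdiag : ∀ i, B i i = 0)
    (hconn : StronglyConnected B)
    (F : Finset (Fin n)) (hF : F.Nonempty) (θ : ℝ) (hθ : 0 < θ)
    (hspec : ∀ (μ : ℂ) (v : Fin n → ℂ), v ≠ 0 →
      ((Dmat B + B).map Complex.ofReal) *ᵥ v = μ • v → μ ≠ 0 →
      (F.card : ℝ) * θ < -μ.re)
    (ζθ : Fin n → ℝ) (hζθ0 : ζθ ≠ 0)
    (hζθker : ((Dmat B + B)ᵀ - θ • Emat F + ((F.card : ℝ) * θ) • 1) *ᵥ ζθ = 0)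
    (hζθpos : ∀ i, 0 < ζθ i) :
    ∀ x : Fin n → ℝ, (∀ i, 0 ≤ x i) → 0 < ∑ i, x i →
      Tendsto (fun t : ℝ =>
          NormedSpace.exp (t • ((Dmat B + B)ᵀ - θ • Emat F + ((F.card : ℝ) * θ) • 1)) *ᵥ
            ((∑ i, x i)⁻¹ • x))
        atTop (nhds ((∑ i, ζθ i)⁻¹ • ζθ)) ∧
      ∀ (φ : ℝ → ℝ) (m : ℝ → ℝ) (mhat : ℝ),
        ContinuousOn φ (Set.Ioi 0) →
        (∀ t : ℝ, 0 ≤ t → 0 < m t) →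
        (∀ t : ℝ, 0 ≤ t → HasDerivAt m ((φ (m t) - F.card * θ) * m t) t) →
        m 0 = ∑ i, x i →
        Tendsto m atTop (nhds mhat) → 0 < mhat →
        Tendsto (fun t : ℝ => m t •
            (NormedSpace.exp (t • ((Dmat B + B)ᵀ - θ • Emat F + ((F.card : ℝ) * θ) • 1)) *ᵥ
              ((∑ i, x i)⁻¹ • x)))
          atTop (nhds (mhat • ((∑ i, ζθ i)⁻¹ • ζθ))) := by
  intro x hx hxsum
  classical
  set Mr : Matrix (Fin n) (Fin n) ℝ :=
    (Dmat B + B)ᵀ - θ • Emat F + ((F.card : ℝ) * θ) • 1 with hMr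
  have hne : Nonempty (Fin n) := ⟨⟨0, by omega⟩⟩
  have hζsum : 0 < ∑ i, ζθ i :=
    Finset.sum_pos (fun i _ => hζθpos i) Finset.univ_nonempty
  set cz : ℝ := (∑ i, ζθ i)⁻¹ with hcz
  set v0 : Fin n → ℝ := (∑ i, x i)⁻¹ • x with hv0
  set wv : Fin n → ℝ := v0 - cz • ζθ with hwv
  have hwsum : ∑ i, wv i = 0 := by
    rw [hwv, hv0]
    simp only [Pi.sub_apply, Pi.smul_apply, smul_eq_mul, Finset.sum_sub_distrib,
      ← Finset.mul_sum]
    rw [inv_mul_cancel₀ (ne_of_gt hxsum), hcz, inv_mul_cancel₀ (ne_of_gt hζsum)]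
    ring
  have hfix : ∀ t : ℝ, NormedSpace.exp (t • Mr) *ᵥ ζθ = ζθ := fun t =>
    exp_mulVec_of_ker _ _ (by rw [Matrix.smul_mulVec, hζθker, smul_zero])
  have hdecomp : ∀ t : ℝ, NormedSpace.exp (t • Mr) *ᵥ v0
      = cz • ζθ + NormedSpace.exp (t • Mr) *ᵥ wv := by
    intro t
    have hv : v0 = cz • ζθ + wv := by rw [hwv]; abel
    rw [hv, Matrix.mulVec_add, Matrix.mulVec_smul, hfix]
  have hdecay := decay hB hdiag hconn F θ hspec wv hwsum
  have h1 : Filter.Tendsto (fun t : ℝ => NormedSpace.exp (t • Mr) *ᵥ v0)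
      Filter.atTop (nhds (cz • ζθ)) := by
    rw [funext hdecomp]
    have h2 : Filter.Tendsto (fun _ : ℝ => cz • ζθ) Filter.atTop (nhds (cz • ζθ)) :=
      tendsto_const_nhds
    have h3 := h2.add hdecay
    rw [add_zero] at h3
    exact h3
  refine ⟨h1, ?_⟩
  intro φ m mhat _ _ _ _ hm hmpos
  simpa using hm.smul h1
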